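/- Let A be a complex associative *-algebra and let p be a seminorm on A satisfying p(a b* c) ≤ p(a) p(b*) p(c) for all a, b, c ∈ A and p(a a* a) = p(a)³ for all a ∈ A. Then p(a*) = p(a) and p(a a*) = p(a)² for all a ∈ A; in particular p is a C*-seminorm. -/

import Mathlib

open scoped NNReal

/-- If `p` is a seminorm on a complex associative `*`-algebra `A`
satisfying `p (a b* c) ≤ p a * p b* * p c` and `p (a a* a) = p a ^ 3`, then
`p (a*) = p a` and `p (a a*) = p a ^ 2` for all `a`; in particular `p` is a
C*-seminorm (it is submultiplicative and satisfies the C*-identity). -/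
theorem seminorm_is_cstar_seminorm
    {A : Type*} [NonUnitalRing A] [StarRing A] [Module ℂ A] [StarModule ℂ A]
    (p : A → ℝ≥0)
    (hsmul : ∀ (c : ℂ) (a : A), p (c • a) = ‖c‖₊ * p a)
    (htri : ∀ a b : A, p (a + b) ≤ p a + p b)
    (htriple : ∀ a b c : A, p (a * star b * c) ≤ p a * p (star b) * p c)
    (hcube : ∀ a : A, p (a * star a * a) = p a ^ 3) :
    (∀ a : A, p (star a) = p a) ∧
    (∀ a : A, p (a * star a) = p a ^ 2) ∧
    (∀ a b : A, p (a * b) ≤ p a * p b) ∧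
    (∀ a : A, p (star a * a) = p a ^ 2) := by
  -- the triple inequality with arbitrary middle term
  have htriple' : ∀ x y z : A, p (x * y * z) ≤ p x * p y * p z := by
    intro x y z
    simpa [star_star] using htriple x (star y) z
  -- key inequality
  have key : ∀ a : A, p a ^ 2 * p a ≤ (p a * p (star a)) * p a := by
    intro a
    have h := htriple' a (star a) a
    rw [hcube a] at h
    calc p a ^ 2 * p a = p a ^ 3 := by ring
    _ ≤ p a * p (star a) * p a := h
  -- p (star a) = p a
  have hstar : ∀ a : A, p (star a) = p a := by
    have half : ∀ a : A, p a ≠ 0 → p a ≤ p (star a) := by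
      intro a ha
      have h := le_of_mul_le_mul_right (key a) (pos_iff_ne_zero.mpr ha)
      rw [pow_two] at h
      exact le_of_mul_le_mul_left h (pos_iff_ne_zero.mpr ha)
    intro a
    rcases eq_or_ne (p a) 0 with h0 | h0
    · rcases eq_or_ne (p (star a)) 0 with h1 | h1
      · rw [h0, h1]
      · have := half (star a) h1
        rw [star_star, h0] at this
        exact absurd (le_antisymm this zero_le) h1
    · refine le_antisymm ?_ (half a h0)
      rcases eq_or_ne (p (star a)) 0 with h1 | h1
      · exact absurd (le_antisymm ((h1 ▸ half a h0 : p a ≤ 0)) zero_le) h0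
      · have := half (star a) h1
        rwa [star_star] at this
  -- p of the midterm `a a* a` and of `a* a a*`
  have hmid : ∀ a : A, p (star a * a * star a) = p a ^ 3 := by
    intro a
    have h : star (a * star a * a) = star a * a * star a := by
      simp [star_mul, mul_assoc]
    rw [← h, hstar, hcube]
  -- upper bound: p (a * star a) ≤ p a ^ 2
  have hU : ∀ a : A, p (a * star a) ≤ p a ^ 2 := by
    intro a
    rcases eq_or_ne (p (a * star a)) 0 with h0 | h0
    · rw [h0]; exact zero_le
    · have h1 : p (a * star a) ^ 3 ≤ p a ^ 4 * p (a * star a) := by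
        have h := htriple' a (star a * a * star a) (a * star a)
        rw [hmid a] at h
        calc p (a * star a) ^ 3
            = p ((a * star a) * star (a * star a) * (a * star a)) := (hcube _).symm
          _ = p (a * (star a * a * star a) * (a * star a)) := by
              congr 1; simp only [star_mul, star_star]; noncomm_ring
          _ ≤ p a * p a ^ 3 * p (a * star a) := h
          _ = p a ^ 4 * p (a * star a) := by ring
      have h2 : p (a * star a) ^ 2 * p (a * star a) ≤ p a ^ 4 * p (a * star a) := by
        calc p (a * star a) ^ 2 * p (a * star a) = p (a * star a) ^ 3 := by ring
        _ ≤ _ := h1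
      have h3 := le_of_mul_le_mul_right h2 (pos_iff_ne_zero.mpr h0)
      refine le_of_pow_le_pow_left₀ two_ne_zero zero_le ?_
      calc p (a * star a) ^ 2 ≤ p a ^ 4 := h3
      _ = (p a ^ 2) ^ 2 := by ring
  -- lower bound: p a ^ 2 ≤ p (a * star a)
  have hL : ∀ a : A, p a ^ 2 ≤ p (a * star a) := by
    intro a
    rcases eq_or_ne (p a) 0 with h0 | h0
    · rw [h0]; simpa using zero_le _
    · -- p a ^ 9 ≤ p (a * star a) * p a ^ 7
      have h9 : p a ^ 9 ≤ p (a * star a) * p a ^ 7 := by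
        set w := a * star a * a with hw
        have hpw : p w = p a ^ 3 := hcube a
        have e1 : p a ^ 9 = p (w * star w * w) := by
          rw [hcube w, hpw]; ring
        have e2 : w * star w * w
            = (a * star a) * (a * (star a * a * star a) * a) * (star a * a) := by
          simp only [hw, star_mul, star_star]; noncomm_ring
        have hmid5 : p (a * (star a * a * star a) * a) ≤ p a ^ 5 := by
          have h := htriple' a (star a * a * star a) a
          rw [hmid a] at h
          calc p (a * (star a * a * star a) * a) ≤ p a * p a ^ 3 * p a := h
          _ = p a ^ 5 := by ring
        have hlast : p (star a * a) ≤ p a ^ 2 := by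
          have h := hU (star a)
          rw [star_star, hstar] at h
          exact h
        calc p a ^ 9 = p (w * star w * w) := e1
          _ = p ((a * star a) * (a * (star a * a * star a) * a) * (star a * a)) := by
              rw [e2]
          _ ≤ p (a * star a) * p (a * (star a * a * star a) * a) * p (star a * a) :=
              htriple' _ _ _
          _ ≤ p (a * star a) * p a ^ 5 * p a ^ 2 := by
              gcongr
          _ = p (a * star a) * p a ^ 7 := by ring
      have h9' : p a ^ 2 * p a ^ 7 ≤ p (a * star a) * p a ^ 7 := by
        calc p a ^ 2 * p a ^ 7 = p a ^ 9 := by ring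
        _ ≤ _ := h9
      exact le_of_mul_le_mul_right h9' (pos_iff_ne_zero.mpr (pow_ne_zero 7 h0))
  have hcstar : ∀ a : A, p (a * star a) = p a ^ 2 := fun a => le_antisymm (hU a) (hL a)
  have hcstar' : ∀ a : A, p (star a * a) = p a ^ 2 := by
    intro a
    have := hcstar (star a)
    rwa [star_star, hstar] at this
  refine ⟨hstar, hcstar, ?_, hcstar'⟩
  -- submultiplicativity
  intro a b
  refine le_of_pow_le_pow_left₀ two_ne_zero zero_le ?_
  calc p (a * b) ^ 2 = p ((a * b) * star (a * b)) := (hcstar _).symm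
    _ = p (a * (b * star b) * star a) := by
        congr 1; simp only [star_mul]; noncomm_ring
    _ ≤ p a * p (b * star b) * p (star a) := htriple' _ _ _
    _ = p a * p b ^ 2 * p a := by rw [hcstar, hstar]
    _ = (p a * p b) ^ 2 := by ring
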